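/- Let r ≥ 1 and θ = e^{2πi/r}. Then (1/2) Σ over pairs of distinct m₁, m₂ ∈ {0,...,r-1} of θ^{m₁+m₂}/(θ^{m₂} − θ^{m₁})² equals −r(r²−1)/24. -/

import Mathlib

open Finset

lemma psi1_geom_zero (x : ℂ) (r : ℕ) (hx1 : x ≠ 1) (hxr : x ^ r = 1) :
    ∑ j ∈ range r, x ^ j = 0 := by
  rw [geom_sum_eq hx1, hxr, sub_self, zero_div]

lemma psi1_sum_id_pow (x : ℂ) (n : ℕ) :
    (x - 1) * ∑ j ∈ range n, (j : ℂ) * x ^ j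
      = ((n : ℂ) - 1) * x ^ n - (∑ j ∈ range n, x ^ j) + 1 := by
  induction n with
  | zero => simp
  | succ n ih =>
    rw [sum_range_succ, sum_range_succ]
    push_cast
    linear_combination ih

lemma psi1_sum_sq_pow (x : ℂ) (n : ℕ) :
    (x - 1) * ∑ j ∈ range n, (j : ℂ) ^ 2 * x ^ j
      = ((n : ℂ) - 1) ^ 2 * x ^ n - 2 * (∑ j ∈ range n, (j : ℂ) * x ^ j)
        + (∑ j ∈ range n, x ^ j) - 1 := by
  induction n with
  | zero => simp
  | succ n ih =>
    rw [sum_range_succ, sum_range_succ, sum_range_succ]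
    push_cast
    linear_combination ih

lemma psi1_key_root (x : ℂ) (r : ℕ) (hx1 : x ≠ 1) (hxr : x ^ r = 1) :
    2 * (r : ℂ) * (x / (x - 1) ^ 2)
      = (r : ℂ) * (∑ j ∈ range r, (j : ℂ) * x ^ j)
        - ∑ j ∈ range r, (j : ℂ) ^ 2 * x ^ j := by
  have hG := psi1_geom_zero x r hx1 hxr
  have hA := psi1_sum_id_pow x r
  have hB := psi1_sum_sq_pow x r
  rw [hG, hxr] at hA hB
  have hx : x - 1 ≠ 0 := sub_ne_zero.mpr hx1
  have main : 2 * (r : ℂ) * x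
      = ((r : ℂ) * (∑ j ∈ range r, (j : ℂ) * x ^ j)
          - ∑ j ∈ range r, (j : ℂ) ^ 2 * x ^ j) * (x - 1) ^ 2 := by
    linear_combination (-((r:ℂ)*(x-1))-2)*hA + (x-1)*hB
  rw [mul_div_assoc'] at *
  rw [main]
  field_simp

lemma psi1_sum_range_id (n : ℕ) :
    2 * ∑ j ∈ range n, (j : ℂ) = (n : ℂ) * ((n : ℂ) - 1) := by
  induction n with
  | zero => simp
  | succ n ih =>
    rw [sum_range_succ]
    push_cast
    linear_combination ih

lemma psi1_sum_range_sq (n : ℕ) :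
    6 * ∑ j ∈ range n, (j : ℂ) ^ 2
      = (n : ℂ) * ((n : ℂ) - 1) * (2 * (n : ℂ) - 1) := by
  induction n with
  | zero => simp
  | succ n ih =>
    rw [sum_range_succ]
    push_cast
    linear_combination ih

/-- `Ψ⁽¹⁾_r(∅) = -r(r²-1)/24`. -/
theorem psi1_eval (r : ℕ) (hr : 1 ≤ r) (θ : ℂ)
    (hθ : θ = Complex.exp (2 * Real.pi * Complex.I / r)) :
    (1 / 2 : ℂ) *
        ∑ m₁ ∈ Finset.range r, ∑ m₂ ∈ Finset.range r,
          (if m₁ ≠ m₂ then θ ^ (m₁ + m₂) / (θ ^ m₂ - θ ^ m₁) ^ 2 else 0) =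
      -(r : ℂ) * ((r : ℂ) ^ 2 - 1) / 24 := by
  have hrC : (r : ℂ) ≠ 0 := Nat.cast_ne_zero.mpr (by omega)
  have hprim : IsPrimitiveRoot θ r := by
    rw [hθ]; exact Complex.isPrimitiveRoot_exp r (by omega)
  have hθr : θ ^ r = 1 := hprim.pow_eq_one
  have hθ0 : θ ≠ 0 := by
    intro h
    rw [h, zero_pow (by omega)] at hθr
    exact zero_ne_one hθr
  have hpow : ∀ k : ℕ, 0 < k → k < r → θ ^ k ≠ 1 := fun k h1 h2 =>
    hprim.pow_ne_one_of_pos_of_lt h1.ne' h2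
  have hmod : ∀ a : ℕ, θ ^ a = θ ^ (a % r) := by
    intro a
    conv_lhs => rw [← Nat.div_add_mod a r]
    rw [pow_add, pow_mul, hθr, one_pow, one_mul]
  set S : ℂ := ∑ k ∈ range r, (if k ≠ 0 then θ ^ k / (θ ^ k - 1) ^ 2 else 0) with hS
  -- Step 1: each inner sum equals S
  have inner : ∀ m₁ ∈ range r,
      (∑ m₂ ∈ range r, (if m₁ ≠ m₂ then θ ^ (m₁ + m₂) / (θ ^ m₂ - θ ^ m₁) ^ 2 else 0))
        = S := by
    intro m₁ hm₁
    rw [mem_range] at hm₁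
    rw [hS]
    refine (Finset.sum_nbij' (fun k => (m₁ + k) % r) (fun m₂ => (m₂ + (r - m₁)) % r)
      ?_ ?_ ?_ ?_ ?_).symm
    · intro k _; exact mem_range.mpr (Nat.mod_lt _ (by omega))
    · intro m₂ _; exact mem_range.mpr (Nat.mod_lt _ (by omega))
    · intro k hk
      rw [mem_range] at hk
      rw [Nat.mod_add_mod, show m₁ + k + (r - m₁) = k + r by omega,
        Nat.add_mod_right, Nat.mod_eq_of_lt hk]
    · intro m₂ hm₂
      rw [mem_range] at hm₂
      rw [Nat.add_mod_mod, show m₁ + (m₂ + (r - m₁)) = m₂ + r by omega,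
        Nat.add_mod_right, Nat.mod_eq_of_lt hm₂]
    · intro k hk
      rw [mem_range] at hk
      by_cases hk0 : k = 0
      · subst hk0
        rw [Nat.add_zero, Nat.mod_eq_of_lt hm₁]
        simp
      · have hm₂lt : (m₁ + k) % r < r := Nat.mod_lt _ (by omega)
        have hm₂ : (m₁ + k) % r = if m₁ + k < r then m₁ + k else m₁ + k - r := by
          split_ifs with h
          · exact Nat.mod_eq_of_lt h
          · rw [Nat.mod_eq_sub_mod (by omega), Nat.mod_eq_of_lt (by omega)]
        have hne : m₁ ≠ (m₁ + k) % r := by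
          rw [hm₂]; split_ifs with h <;> omega
        rw [if_pos hk0, if_pos hne]
        have h2 : θ ^ ((m₁ + k) % r) = θ ^ m₁ * θ ^ k := by
          rw [← hmod, pow_add]
        rw [pow_add, h2, show θ ^ m₁ * θ ^ k - θ ^ m₁ = θ ^ m₁ * (θ ^ k - 1) by ring,
          mul_pow, show θ ^ m₁ * (θ ^ m₁ * θ ^ k) = (θ ^ m₁) ^ 2 * θ ^ k by ring,
          mul_div_mul_left _ _ (pow_ne_zero 2 (pow_ne_zero m₁ hθ0))]
  -- Step 2: compute S
  have hfull_swap : ∀ (c : ℕ → ℂ),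
      (∑ k ∈ range r, ∑ j ∈ range r, c j * (θ ^ k) ^ j) = (r : ℂ) * c 0 := by
    intro c
    rw [Finset.sum_comm]
    have : ∀ j ∈ range r, (∑ k ∈ range r, c j * (θ ^ k) ^ j)
        = if j = 0 then (r : ℂ) * c 0 else 0 := by
      intro j hj
      rw [mem_range] at hj
      split_ifs with hj0
      · subst hj0; simp [mul_comm]
      · rw [← Finset.mul_sum]
        have : (∑ k ∈ range r, (θ ^ k) ^ j) = 0 := by
          have := psi1_geom_zero (θ ^ j) r (hpow j (by omega) hj)
            (by rw [← pow_mul, mul_comm, pow_mul, hθr, one_pow])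
          rw [← this]
          exact Finset.sum_congr rfl fun k _ => by rw [← pow_mul, mul_comm, pow_mul]
        rw [this, mul_zero]
    rw [Finset.sum_congr rfl this, Finset.sum_ite_eq' (range r) 0 (fun _ => (r : ℂ) * c 0)]
    simp [mem_range]; omega
  have key : ∀ k ∈ range r, (if k ≠ 0 then 2 * (r : ℂ) * (θ ^ k / (θ ^ k - 1) ^ 2) else 0)
      = ((r : ℂ) * (∑ j ∈ range r, (j : ℂ) * (θ ^ k) ^ j)
          - ∑ j ∈ range r, (j : ℂ) ^ 2 * (θ ^ k) ^ j)
        - (if k = 0 then ((r : ℂ) * (∑ j ∈ range r, (j : ℂ) * (θ ^ k) ^ j)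
          - ∑ j ∈ range r, (j : ℂ) ^ 2 * (θ ^ k) ^ j) else 0) := by
    intro k hk
    rw [mem_range] at hk
    by_cases hk0 : k = 0
    · subst hk0; simp
    · rw [if_neg hk0, if_pos hk0, sub_zero]
      exact psi1_key_root (θ ^ k) r (hpow k (by omega) hk)
        (by rw [← pow_mul, mul_comm, pow_mul, hθr, one_pow])
  have hSval : 2 * (r : ℂ) * S = -((r : ℂ) * ((r : ℂ) * ((r : ℂ) - 1)) / 2)
      + (r : ℂ) * ((r : ℂ) - 1) * (2 * (r : ℂ) - 1) / 6 := by
    rw [hS, Finset.mul_sum]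
    have step1 : ∀ k ∈ range r,
        2 * (r : ℂ) * (if k ≠ 0 then θ ^ k / (θ ^ k - 1) ^ 2 else 0)
          = (if k ≠ 0 then 2 * (r : ℂ) * (θ ^ k / (θ ^ k - 1) ^ 2) else 0) := by
      intro k _; split_ifs <;> simp
    rw [Finset.sum_congr rfl step1, Finset.sum_congr rfl key, Finset.sum_sub_distrib]
    rw [Finset.sum_sub_distrib, ← Finset.mul_sum]
    have e1 : (∑ k ∈ range r, ∑ j ∈ range r, (j : ℂ) * (θ ^ k) ^ j) = 0 := by
      have := hfull_swap (fun j => (j : ℂ))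
      simpa using this
    have e2 : (∑ k ∈ range r, ∑ j ∈ range r, (j : ℂ) ^ 2 * (θ ^ k) ^ j) = 0 := by
      have := hfull_swap (fun j => (j : ℂ) ^ 2)
      simpa using this
    rw [e1, e2, mul_zero, zero_sub]
    have e3 : (∑ k ∈ range r, if k = 0 then
        ((r : ℂ) * (∑ j ∈ range r, (j : ℂ) * (θ ^ k) ^ j)
          - ∑ j ∈ range r, (j : ℂ) ^ 2 * (θ ^ k) ^ j) else 0)
        = (r : ℂ) * (∑ j ∈ range r, (j : ℂ)) - ∑ j ∈ range r, (j : ℂ) ^ 2 := by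
      rw [Finset.sum_ite_eq' (range r) 0]
      simp [mem_range]
      intro h; omega
    rw [e3]
    have g1 := psi1_sum_range_id r
    have g2 := psi1_sum_range_sq r
    linear_combination (-(r:ℂ)/2) * g1 + (1/6 : ℂ) * g2
  have hSfinal : S = -((r : ℂ) ^ 2 - 1) / 12 := by
    have h2r : (2 : ℂ) * r ≠ 0 := by simp [hrC]
    apply mul_left_cancel₀ h2r
    linear_combination hSval
  rw [Finset.sum_congr rfl inner, Finset.sum_const, card_range, nsmul_eq_mul, hSfinal]
  field_simp
  ring
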